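/- Let a : ℕ → ℤ, not identically zero, with a_d = 0 for all d > v, and define f(m) = ∑_{d ∣ m} a_d · d · θ(m/d) with θ(n) = ∑_{e ∣ e} e·μ(e). Suppose the sequence (b_m)_{m≥0} defined by b_{m−1} = f(m) satisfies a linear recurrence of some order u ≥ 1 with constant integer coefficients and leading coefficient 1 for all m ≥ u. Then a contradiction arises; i.e., no such nonzero finitely-supported a exists. -/

import Mathlib

/-- `θ(n) = ∑_{e ∣ n} e · μ(e)`, where `μ` is the Möbius function. -/
def theta (n : ℕ) : ℤ :=
  ∑ e ∈ n.divisors, (e : ℤ) * ArithmeticFunction.moebius e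

/-- `f(m) = ∑_{d ∣ m} a_d · d · θ(m/d)`. -/
def convTheta (a : ℕ → ℤ) (m : ℕ) : ℤ :=
  ∑ d ∈ m.divisors, a d * d * theta (m / d)

open ArithmeticFunction Finset in
lemma theta_eq_prod {n : ℕ} (hn : n ≠ 0) :
    theta n = ∏ p ∈ n.primeFactors, (1 - (p : ℤ)) := by
  set F : ArithmeticFunction ℤ := pmul (↑(ArithmeticFunction.id)) moebius with hF
  have hFapp : ∀ e, F e = (e : ℤ) * moebius e := by
    intro e; simp [hF, pmul_apply, natCoe_apply, ArithmeticFunction.id_apply]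
  have hth : theta n = ((↑(ArithmeticFunction.zeta : ArithmeticFunction ℕ) : ArithmeticFunction ℤ) * F) n := by
    rw [coe_zeta_mul_apply, theta]
    exact Finset.sum_congr rfl fun e _ => (hFapp e).symm
  have hmul : IsMultiplicative ((↑(ArithmeticFunction.zeta : ArithmeticFunction ℕ) : ArithmeticFunction ℤ) * F) :=
    isMultiplicative_zeta.natCast.mul (isMultiplicative_id.natCast.pmul isMultiplicative_moebius)
  have hpp : ∀ p k : ℕ, p.Prime → k ≠ 0 →
      ((↑(ArithmeticFunction.zeta : ArithmeticFunction ℕ) : ArithmeticFunction ℤ) * F) (p ^ k) = 1 - p := by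
    intro p k hp hk
    rw [coe_zeta_mul_apply, Nat.sum_divisors_prime_pow hp]
    have hsub : ({0, 1} : Finset ℕ) ⊆ Finset.range (k + 1) := by
      intro i hi; simp at hi; rcases hi with rfl | rfl <;> simp <;> omega
    rw [← Finset.sum_subset hsub]
    · rw [Finset.sum_pair (by norm_num : (0:ℕ) ≠ 1)]
      simp [hFapp, moebius_apply_prime hp]; ring
    · intro i _ hi
      have h2 : i ≠ 0 ∧ i ≠ 1 := by simpa using hi
      rw [hFapp, moebius_apply_prime_pow hp h2.1, if_neg h2.2]
      simp
  rw [hth, hmul.multiplicative_factorization _ hn, Finsupp.prod]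
  rw [Nat.support_factorization]
  refine Finset.prod_congr rfl fun p hp => ?_
  exact hpp p _ (Nat.prime_of_mem_primeFactors hp)
    (Nat.Prime.factorization_pos_of_dvd (Nat.prime_of_mem_primeFactors hp) hn
      (Nat.dvd_of_mem_primeFactors hp)).ne'

lemma theta_prime_pow {p i : ℕ} (hp : p.Prime) (hi : i ≠ 0) :
    theta (p ^ i) = 1 - (p : ℤ) := by
  rw [theta_eq_prod (pow_ne_zero i hp.ne_zero), Nat.primeFactors_prime_pow hi hp,
    Finset.prod_singleton]

/-- The special values `f(l·p^i) = a_l · l · (1-p)`. -/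
lemma convTheta_special (v : ℕ) (a : ℕ → ℤ) (ha : ∀ d, v < d → a d = 0)
    {l : ℕ} (hl : 0 < l) (hmin : ∀ d, 0 < d → d < l → a d = 0)
    {p : ℕ} (hp : p.Prime) (hpv : v < p) {i : ℕ} (hi : i ≠ 0) :
    convTheta a (l * p ^ i) = a l * l * (1 - (p : ℤ)) := by
  have hm0 : l * p ^ i ≠ 0 := Nat.mul_ne_zero hl.ne' (pow_ne_zero i hp.ne_zero)
  rw [convTheta, Finset.sum_eq_single l]
  · rw [Nat.mul_div_cancel_left _ hl, theta_prime_pow hp hi]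
  · intro d hd hdl
    rcases eq_or_ne (a d) 0 with h0 | h0
    · simp [h0]
    · exfalso
      obtain ⟨hddvd, -⟩ := Nat.mem_divisors.mp hd
      have hd0 : 0 < d := Nat.pos_of_mem_divisors hd
      have hdv : d ≤ v := by
        by_contra hgt; exact h0 (ha d (by omega))
      have hpd : ¬ p ∣ d := fun h => by
        have := Nat.le_of_dvd hd0 h; omega
      have hcop : Nat.Coprime d (p ^ i) :=
        Nat.Coprime.pow_right _ (((Nat.Prime.coprime_iff_not_dvd hp).mpr hpd).symm)
      have hdl' : d ∣ l := hcop.dvd_of_dvd_mul_right hddvd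
      exact h0 (hmin d hd0 (lt_of_le_of_ne (Nat.le_of_dvd hl hdl') hdl))
  · intro h
    exact absurd (Nat.mem_divisors.mpr ⟨dvd_mul_right _ _, hm0⟩) h

/-- If `t` distinct primes `> v` and `≠ 2` divide `m`, then `2^t ∣ f(m)`. -/
lemma two_pow_dvd_convTheta (v : ℕ) (a : ℕ → ℤ) (ha : ∀ d, v < d → a d = 0)
    {m : ℕ} (hm : m ≠ 0) (S : Finset ℕ)
    (hS : ∀ q ∈ S, q.Prime ∧ v < q ∧ q ≠ 2 ∧ q ∣ m) :
    (2 : ℤ) ^ S.card ∣ convTheta a m := by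
  rw [convTheta]
  apply Finset.dvd_sum
  intro d hd
  rcases eq_or_ne (a d) 0 with h0 | h0
  · simp [h0]
  obtain ⟨hddvd, -⟩ := Nat.mem_divisors.mp hd
  have hd0 : 0 < d := Nat.pos_of_mem_divisors hd
  have hdv : d ≤ v := by by_contra hgt; exact h0 (ha d (by omega))
  have hmd0 : m / d ≠ 0 := (Nat.div_pos (Nat.le_of_dvd (Nat.pos_of_ne_zero hm) hddvd) hd0).ne'
  have hsub : S ⊆ (m / d).primeFactors := by
    intro q hq
    obtain ⟨hqp, hqv, -, hqm⟩ := hS q hq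
    have hqd : ¬ q ∣ d := fun h => by have := Nat.le_of_dvd hd0 h; omega
    have hcop : Nat.Coprime q d := (Nat.Prime.coprime_iff_not_dvd hqp).mpr hqd
    have : q ∣ d * (m / d) := by rwa [Nat.mul_div_cancel' hddvd]
    exact Nat.mem_primeFactors.mpr ⟨hqp, hcop.dvd_of_dvd_mul_left this, hmd0⟩
  have h1 : (2 : ℤ) ^ S.card ∣ ∏ q ∈ S, (1 - (q : ℤ)) := by
    rw [← Finset.prod_const]
    apply Finset.prod_dvd_prod_of_dvd
    intro q hq
    obtain ⟨hqp, -, hq2, -⟩ := hS q hq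
    obtain ⟨r, hr⟩ := hqp.odd_of_ne_two hq2
    exact ⟨-r, by push_cast [hr]; ring⟩
  have h2 : (∏ q ∈ S, (1 - (q : ℤ))) ∣ ∏ q ∈ (m / d).primeFactors, (1 - (q : ℤ)) :=
    Finset.prod_dvd_prod_of_subset _ _ _ hsub
  have h3 : (2 : ℤ) ^ S.card ∣ theta (m / d) := by
    rw [theta_eq_prod hmd0]; exact h1.trans h2
  exact h3.mul_left _

/-- Extension of divisibility along the recurrence. -/
lemma dvd_extend (a : ℕ → ℤ) (u : ℕ) (hu : 1 ≤ u) (c : ℕ → ℤ)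
    (hrec : ∀ m, u ≤ m →
      convTheta a (m + 1) + ∑ j ∈ Finset.Icc 1 u, c j * convTheta a (m - j + 1) = 0)
    (D : ℤ) (N : ℕ) (hN : u ≤ N)
    (hbase : ∀ k, 1 ≤ k → k ≤ u → D ∣ convTheta a (N + k)) :
    ∀ m, N + 1 ≤ m → D ∣ convTheta a m := by
  intro m
  induction m using Nat.strong_induction_on with
  | _ m ih =>
    intro hm
    by_cases hcase : m ≤ N + u
    · have hme : m = N + (m - N) := by omega
      rw [hme]; exact hbase _ (by omega) (by omega)
    · have hm1 : u ≤ m - 1 := by omega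
      have hr := hrec (m - 1) hm1
      have hm' : m - 1 + 1 = m := by omega
      rw [hm'] at hr
      have hfm : convTheta a m = -∑ j ∈ Finset.Icc 1 u, c j * convTheta a (m - 1 - j + 1) := by
        linarith
      rw [hfm, dvd_neg]
      apply Finset.dvd_sum
      intro j hj
      have hj' := Finset.mem_Icc.mp hj
      have hmj : m - 1 - j + 1 = m - j := by omega
      rw [hmj]
      exact (ih (m - j) (by omega) (by omega)).mul_left _

lemma block_eq {t : ℕ} {b b' j j' : ℕ} (ht : 0 < t) (hj : j < t) (hj' : j' < t)
    (h : b * t + j = b' * t + j') : b = b' ∧ j = j' := by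
  have h1 : (j + b * t) / t = b := by
    rw [Nat.add_mul_div_right _ _ ht, Nat.div_eq_of_lt hj, Nat.zero_add]
  have h2 : (j' + b' * t) / t = b' := by
    rw [Nat.add_mul_div_right _ _ ht, Nat.div_eq_of_lt hj', Nat.zero_add]
  have hb : b = b' := by rw [← h1, ← h2, Nat.add_comm j, Nat.add_comm j', h]
  subst hb
  exact ⟨rfl, by omega⟩

/-- Let `a : ℕ → ℤ`, not identically zero on positive integers, with `a_d = 0`
for all `d > v`, and let `f(m) = ∑_{d ∣ m} a_d · d · θ(m/d)`. If the sequence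
`b_m = f(m+1)` (i.e. `b_{m−1} = f(m)`) satisfies a linear recurrence of some
order `u ≥ 1` with constant integer coefficients and leading coefficient `1`,
for all `m ≥ u`, then a contradiction arises. -/
theorem no_recurrence (v : ℕ) (a : ℕ → ℤ) (ha : ∀ d, v < d → a d = 0)
    (hne : ∃ d, 0 < d ∧ a d ≠ 0) (u : ℕ) (hu : 1 ≤ u) (c : ℕ → ℤ)
    (hrec : ∀ m, u ≤ m →
      convTheta a (m + 1) + ∑ j ∈ Finset.Icc 1 u, c j * convTheta a (m - j + 1) = 0) :
    False := by
  classical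
  -- minimal positive index with a_l ≠ 0
  set l := Nat.find hne with hldef
  obtain ⟨hl0, hal⟩ := Nat.find_spec hne
  have hmin : ∀ d, 0 < d → d < l → a d = 0 := by
    intro d hd hdl
    by_contra h
    exact Nat.find_min hne hdl ⟨hd, h⟩
  -- a prime p > v
  obtain ⟨p, hpge, hp⟩ := Nat.exists_infinite_primes (v + 1)
  have hpv : v < p := by omega
  set D : ℤ := a l * l * (1 - (p : ℤ)) with hD
  have hD0 : D ≠ 0 := by
    have h2 : (2 : ℤ) ≤ (p : ℤ) := by exact_mod_cast hp.two_le
    refine mul_ne_zero (mul_ne_zero hal ?_) ?_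
    · exact_mod_cast hl0.ne'
    · intro h; have : (p : ℤ) = 1 := by linarith
      linarith
  -- choose t with ¬ 2^t ∣ D
  set t := D.natAbs with htdef
  have ht : ¬ (2 : ℤ) ^ t ∣ D := by
    intro hdvd
    have h1 : (2 : ℤ) ^ t ≤ |D| := Int.le_of_dvd (abs_pos.mpr hD0) ((dvd_abs _ _).mpr hdvd)
    have h2 : |D| = (t : ℤ) := by rw [Int.abs_eq_natAbs]
    have h3 : (2 : ℤ) ^ t = ((2 ^ t : ℕ) : ℤ) := by push_cast; ring
    rw [h2, h3] at h1
    have h4 : 2 ^ t ≤ t := by exact_mod_cast h1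
    have h5 : t < 2 ^ t := Nat.lt_two_pow_self
    omega
  have ht0 : 0 < t := by
    rcases Nat.eq_zero_or_pos t with h | h
    · exfalso; rw [h, pow_zero] at ht; exact ht (one_dvd D)
    · exact h
  -- infinitely many primes
  set q : ℕ → ℕ := fun i => Nat.nth Nat.Prime (i + v + 3) with hq
  have hqmono : StrictMono (Nat.nth Nat.Prime) := Nat.nth_strictMono Nat.infinite_setOf_prime
  have hqprime : ∀ i, (q i).Prime := fun i =>
    Nat.nth_mem_of_infinite Nat.infinite_setOf_prime _
  have hqge : ∀ i, i + v + 3 ≤ q i := fun i => hqmono.le_apply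
  have hqinj : Function.Injective q := fun i j h => by
    have := hqmono.injective h; omega
  set M : ℕ → ℕ := fun k => ∏ j ∈ Finset.range t, q ((k - 1) * t + j) with hM
  have hM0 : ∀ k, M k ≠ 0 := fun k =>
    Finset.prod_ne_zero_iff.mpr fun j _ => (hqprime _).ne_zero
  have hcop : Set.Pairwise ↑(Finset.Icc 1 u) (Function.onFun Nat.Coprime M) := by
    intro k hk k' hk' hne'
    have hk1 := (Finset.mem_Icc.mp (Finset.mem_coe.mp hk)).1
    have hk'1 := (Finset.mem_Icc.mp (Finset.mem_coe.mp hk')).1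
    simp only [Function.onFun, hM]
    rw [Nat.coprime_prod_left_iff]
    intro j hj
    rw [Nat.coprime_prod_right_iff]
    intro j' hj'
    refine (Nat.coprime_primes (hqprime _) (hqprime _)).mpr ?_
    intro heq
    have hidx := hqinj heq
    have hbe := block_eq ht0 (Finset.mem_range.mp hj) (Finset.mem_range.mp hj') hidx
    exact hne' (by omega)
  obtain ⟨x, hx⟩ := Nat.chineseRemainderOfFinset (fun k => (M k - 1) * k) M (Finset.Icc 1 u)
    (fun k _ => hM0 k) hcop
  set P := ∏ k ∈ Finset.Icc 1 u, M k with hP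
  have hP0 : 0 < P := Finset.prod_pos fun k _ => Nat.pos_of_ne_zero (hM0 k)
  set N := x + u * P with hNdef
  have hNu : u ≤ N := by
    have : u ≤ u * P := Nat.le_mul_of_pos_right u hP0
    omega
  have hdvdNk : ∀ k ∈ Finset.Icc 1 u, M k ∣ N + k := by
    intro k hk
    have hmod := hx k hk
    have h1 : x + k ≡ (M k - 1) * k + k [MOD M k] := hmod.add_right k
    have h2 : (M k - 1) * k + k = M k * k := by
      have hpos := Nat.pos_of_ne_zero (hM0 k)
      calc (M k - 1) * k + k = ((M k - 1) + 1) * k := by ring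
        _ = M k * k := by rw [Nat.sub_add_cancel hpos]
    rw [h2] at h1
    have h4 : M k ∣ x + k :=
      (Nat.modEq_zero_iff_dvd).mp (h1.trans ((Nat.modEq_zero_iff_dvd).mpr (dvd_mul_right _ _)))
    have h5 : M k ∣ u * P := Dvd.dvd.mul_left (Finset.dvd_prod_of_mem M hk) u
    have h6 : N + k = x + k + u * P := by omega
    rw [h6]
    exact Nat.dvd_add h4 h5
  have hbase : ∀ k, 1 ≤ k → k ≤ u → (2 : ℤ) ^ t ∣ convTheta a (N + k) := by
    intro k hk1 hku
    have hkmem : k ∈ Finset.Icc 1 u := Finset.mem_Icc.mpr ⟨hk1, hku⟩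
    set S := Finset.image (fun j => q ((k - 1) * t + j)) (Finset.range t) with hS
    have hinj : Function.Injective fun j => q ((k - 1) * t + j) := by
      intro j j' h
      have := hqinj h
      omega
    have hcard : S.card = t := by
      rw [hS, Finset.card_image_of_injective _ hinj, Finset.card_range]
    have hSmem : ∀ r ∈ S, r.Prime ∧ v < r ∧ r ≠ 2 ∧ r ∣ (N + k) := by
      intro r hr
      obtain ⟨j, hj, rfl⟩ := Finset.mem_image.mp hr
      refine ⟨hqprime _, ?_, ?_, ?_⟩
      · have := hqge ((k - 1) * t + j); omega
      · have := hqge ((k - 1) * t + j); omega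
      · exact dvd_trans (Finset.dvd_prod_of_mem (fun j => q ((k - 1) * t + j)) hj) (hdvdNk k hkmem)
    have := two_pow_dvd_convTheta v a ha (m := N + k) (by omega) S hSmem
    rwa [hcard] at this
  have hall := dvd_extend a u hu c hrec ((2 : ℤ) ^ t) N hNu hbase
  have hge : N + 1 ≤ l * p ^ (N + 1) := by
    have h1 : N + 1 < p ^ (N + 1) := Nat.lt_pow_self hp.one_lt
    have h2 : p ^ (N + 1) ≤ l * p ^ (N + 1) := Nat.le_mul_of_pos_left _ hl0
    omega
  have hfin := hall _ hge
  rw [convTheta_special v a ha hl0 hmin hp hpv (by omega : N + 1 ≠ 0)] at hfin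
  exact ht hfin
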